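/- Let n be a positive integer. Then in ℤ[q], the polynomial Φ_n(q)² divides Σ_{i=0}^{n-1} Σ_{j=0}^{n-1} q^{j²+i+j} · ([i+j choose i]_q)² − Σ_{m=0}^{n-1} q^m · [2m choose m]_q. -/

import Mathlib

open Polynomial Finset

/-- The q-shifted factorial `(q; q)_n = (1-q)(1-q^2)⋯(1-q^n)` in `ℤ[q]`. -/
noncomputable def qPoch (n : ℕ) : Polynomial ℤ := ∏ i ∈ Finset.range n, (1 - X ^ (i + 1))

lemma one_sub_X_pow_ne_zero {k : ℕ} (hk : 0 < k) : (1 - X ^ k : Polynomial ℤ) ≠ 0 := by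
  intro h
  have := congrArg (fun p => Polynomial.coeff p 0) h
  simp [Polynomial.coeff_X_pow, hk.ne] at this

lemma qPoch_ne_zero (n : ℕ) : qPoch n ≠ 0 := by
  unfold qPoch
  rw [Finset.prod_ne_zero_iff]
  exact fun i _ => one_sub_X_pow_ne_zero (Nat.succ_pos i)

lemma qPoch_succ (n : ℕ) : qPoch (n + 1) = qPoch n * (1 - X ^ (n + 1)) :=
  Finset.prod_range_succ _ _

lemma qPoch_zero : qPoch 0 = 1 := Finset.prod_range_zero _

section
variable {B : ℕ → ℕ → Polynomial ℤ}
  (hB : ∀ m k : ℕ, k ≤ m → B m k * (qPoch k * qPoch (m - k)) = qPoch m)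
  (hB' : ∀ m k : ℕ, m < k → B m k = 0)

include hB

lemma B_eq {m k : ℕ} (h : k ≤ m) {C : Polynomial ℤ}
    (hC : C * (qPoch k * qPoch (m - k)) = qPoch m) : C = B m k :=
  mul_right_cancel₀ (mul_ne_zero (qPoch_ne_zero k) (qPoch_ne_zero (m - k)))
    (hC.trans (hB m k h).symm)

lemma B_diag (m : ℕ) : B m m = 1 :=
  (B_eq hB le_rfl (by simp [Nat.sub_self, qPoch_zero])).symm

lemma B_zero (m : ℕ) : B m 0 = 1 :=
  (B_eq hB (Nat.zero_le m) (by simp [qPoch_zero])).symm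

lemma B_symm {m k : ℕ} (h : k ≤ m) : B m k = B m (m - k) := by
  refine B_eq hB (Nat.sub_le m k) ?_
  rw [show m - (m - k) = k by omega, mul_comm (qPoch (m - k))]
  exact hB m k h

include hB' in
lemma Pascal1 (m t : ℕ) : B (m + 1) (t + 1) = B m t + X ^ (t + 1) * B m (t + 1) := by
  rcases lt_trichotomy t m with h | rfl | h
  · obtain ⟨a, rfl⟩ : ∃ a, m = t + (a + 1) := ⟨m - t - 1, by omega⟩
    have h1 := hB (t + (a + 1)) t (by omega)
    have h2 := hB (t + (a + 1)) (t + 1) (by omega)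
    rw [show t + (a + 1) - t = a + 1 by omega] at h1
    rw [show t + (a + 1) - (t + 1) = a by omega] at h2
    refine (B_eq hB (by omega) ?_).symm
    rw [show t + (a + 1) + 1 - (t + 1) = a + 1 by omega]
    rw [qPoch_succ t] at *
    rw [qPoch_succ a] at *
    rw [qPoch_succ (t + (a+1))]
    linear_combination (1 - (X:Polynomial ℤ) ^ (t + 1)) * h1
      + (X:Polynomial ℤ) ^ (t + 1) * (1 - (X:Polynomial ℤ) ^ (a + 1)) * h2
  · rw [B_diag hB, B_diag hB, hB' t (t + 1) (by omega), mul_zero, add_zero]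
  · rw [hB' (m+1) (t+1) (by omega), hB' m t (by omega), hB' m (t+1) (by omega),
      mul_zero, add_zero]

include hB' in
lemma Pascal2 (m t : ℕ) : B (m + 1) (t + 1) = X ^ (m - t) * B m t + B m (t + 1) := by
  rcases lt_trichotomy t m with h | rfl | h
  · obtain ⟨a, rfl⟩ : ∃ a, m = t + (a + 1) := ⟨m - t - 1, by omega⟩
    have h1 := hB (t + (a + 1)) t (by omega)
    have h2 := hB (t + (a + 1)) (t + 1) (by omega)
    rw [show t + (a + 1) - t = a + 1 by omega] at h1 ⊢
    rw [show t + (a + 1) - (t + 1) = a by omega] at h2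
    refine (B_eq hB (by omega) ?_).symm
    rw [show t + (a + 1) + 1 - (t + 1) = a + 1 by omega]
    rw [qPoch_succ t] at *
    rw [qPoch_succ a] at *
    rw [qPoch_succ (t + (a+1))]
    linear_combination (X:Polynomial ℤ) ^ (a + 1) * (1 - (X:Polynomial ℤ) ^ (t + 1)) * h1
      + (1 - (X:Polynomial ℤ) ^ (a + 1)) * h2
  · rw [B_diag hB, B_diag hB, hB' t (t + 1) (by omega), Nat.sub_self, pow_zero,
      one_mul, add_zero]
  · rw [hB' (m+1) (t+1) (by omega), hB' m t (by omega), hB' m (t+1) (by omega),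
      mul_zero, add_zero]

include hB' in
lemma swapLem (a b k : ℕ) :
    ∑ j ∈ range (k + 1), X ^ ((a + 1 - j) * (k - j)) * B (a + 1) j * B b (k - j)
      = ∑ j ∈ range (k + 1), X ^ ((a - j) * (k - j)) * B a j * B (b + 1) (k - j) := by
  set g : ℕ → Polynomial ℤ := fun j => X ^ ((a - j) * (k - j) + (k - j)) * B a j * B b (k - j)
    with hgdef
  set h : ℕ → Polynomial ℤ := fun j => X ^ ((a - j) * (k - j)) * B a j * B b (k - j - 1)
    with hhdef
  have hL : ∑ j ∈ range (k + 1), X ^ ((a + 1 - j) * (k - j)) * B (a + 1) j * B b (k - j)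
      = (∑ i ∈ range k, h i) + ∑ j ∈ range (k + 1), g j := by
    rw [Finset.sum_range_succ' (fun j => X ^ ((a + 1 - j) * (k - j)) * B (a + 1) j * B b (k - j)) k]
    have hc : ∀ i ∈ range k,
        X ^ ((a + 1 - (i + 1)) * (k - (i + 1))) * B (a + 1) (i + 1) * B b (k - (i + 1))
          = h i + g (i + 1) := by
      intro i hi
      rw [mem_range] at hi
      simp only [hgdef, hhdef]
      rw [Pascal2 hB hB' a i]
      rw [show a + 1 - (i + 1) = a - i by omega, show k - (i + 1) = k - i - 1 by omega]
      obtain ⟨c, hc1⟩ : ∃ c, k - i = c + 1 := ⟨k - i - 1, by omega⟩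
      rw [show k - i - 1 = c by omega, hc1]
      by_cases hia : i < a
      · obtain ⟨d, hd1⟩ : ∃ d, a - i = d + 1 := ⟨a - i - 1, by omega⟩
        rw [show a - (i + 1) = d by omega, hd1, Nat.succ_mul, Nat.mul_succ, pow_add, pow_add]
        ring
      · rw [hB' a (i + 1) (by omega), show a - i = 0 by omega]
        ring
    rw [Finset.sum_congr rfl hc, Finset.sum_add_distrib, Finset.sum_range_succ' g k]
    have h0 : X ^ ((a + 1 - 0) * (k - 0)) * B (a + 1) 0 * B b (k - 0) = g 0 := by
      simp only [hgdef, Nat.sub_zero]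
      rw [B_zero hB, B_zero hB, show (a + 1) * k = a * k + k by ring]
    rw [h0]
    ring
  have hR : ∑ j ∈ range (k + 1), X ^ ((a - j) * (k - j)) * B a j * B (b + 1) (k - j)
      = (∑ i ∈ range k, h i) + ∑ j ∈ range (k + 1), g j := by
    rw [Finset.sum_range_succ (fun j => X ^ ((a - j) * (k - j)) * B a j * B (b + 1) (k - j)) k]
    have hc : ∀ j ∈ range k,
        X ^ ((a - j) * (k - j)) * B a j * B (b + 1) (k - j) = h j + g j := by
      intro j hj
      rw [mem_range] at hj
      simp only [hgdef, hhdef]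
      obtain ⟨c, hc1⟩ : ∃ c, k - j = c + 1 := ⟨k - j - 1, by omega⟩
      rw [show k - j - 1 = c by omega, hc1, Pascal1 hB hB' b c, pow_add]
      ring
    rw [Finset.sum_congr rfl hc, Finset.sum_add_distrib]
    have hk0 : X ^ ((a - k) * (k - k)) * B a k * B (b + 1) (k - k) = g k := by
      simp only [hgdef, Nat.sub_self]
      rw [B_zero hB, B_zero hB]
      ring
    rw [hk0, Finset.sum_range_succ g k]
    ring
  rw [hL, hR]

include hB' in
lemma vdm (a b k : ℕ) :
    B (a + b) k = ∑ j ∈ range (k + 1), X ^ ((a - j) * (k - j)) * B a j * B b (k - j) := by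
  induction a generalizing b with
  | zero =>
    rw [zero_add, Finset.sum_eq_single 0]
    · simp [B_zero hB]
    · intro j hj hj0
      rw [hB' 0 j (Nat.pos_of_ne_zero hj0)]
      ring
    · intro hmem
      exact absurd (mem_range.mpr (Nat.succ_pos k)) hmem
  | succ a ih =>
    rw [show a + 1 + b = a + (b + 1) by omega, ih (b + 1)]
    exact (swapLem hB hB' a b k).symm

include hB' in
lemma central (m : ℕ) : B (2 * m) m = ∑ i ∈ range (m + 1), X ^ (i * i) * (B m i) ^ 2 := by
  rw [show 2 * m = m + m by ring, vdm hB hB' m m m]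
  have hc : ∀ j ∈ range (m + 1),
      X ^ ((m - j) * (m - j)) * B m j * B m (m - j)
        = X ^ ((m - j) * (m - j)) * (B m (m - j)) ^ 2 := by
    intro j hj
    rw [mem_range] at hj
    rw [B_symm hB (show j ≤ m by omega)]
    ring
  rw [Finset.sum_congr rfl hc]
  have hr := Finset.sum_range_reflect (fun i => X ^ (i * i) * (B m i) ^ 2) (m + 1)
  simp only [Nat.add_sub_cancel] at hr
  exact hr

end

lemma cyc_not_dvd {n k : ℕ} (hk : 0 < k) (hkn : k < n) :
    ¬ (Polynomial.cyclotomic n ℤ ∣ (1 - X ^ k : Polynomial ℤ)) := by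
  intro hdvd
  have hn : 0 < n := hk.trans hkn
  have hmap : (Polynomial.cyclotomic n ℂ) ∣ (1 - X ^ k : Polynomial ℂ) := by
    have := Polynomial.map_dvd (Int.castRingHom ℂ) hdvd
    simpa [Polynomial.map_cyclotomic] using this
  have hμ : IsPrimitiveRoot (Complex.exp (2 * Real.pi * Complex.I / n)) n :=
    Complex.isPrimitiveRoot_exp n hn.ne'
  have hroot : (Polynomial.cyclotomic n ℂ).IsRoot (Complex.exp (2 * Real.pi * Complex.I / n)) :=
    (Polynomial.isRoot_cyclotomic_iff_charZero hn).mpr hμ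
  have hroot2 := hroot.dvd hmap
  have hpow : Complex.exp (2 * Real.pi * Complex.I / n) ^ k = 1 := by
    have := hroot2
    simp only [Polynomial.IsRoot, Polynomial.eval_sub, Polynomial.eval_one,
      Polynomial.eval_pow, Polynomial.eval_X, sub_eq_zero] at this
    exact this.symm
  have := (hμ.pow_eq_one_iff_dvd k).mp hpow
  exact absurd this (Nat.not_dvd_of_pos_of_lt hk hkn)

lemma cyc_prime {n : ℕ} (hn : 0 < n) : Prime (Polynomial.cyclotomic n ℤ) :=
  (UniqueFactorizationMonoid.irreducible_iff_prime).mp (Polynomial.cyclotomic.irreducible hn)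

lemma cyc_not_dvd_qPoch {n t : ℕ} (hn : 0 < n) (ht : t < n) :
    ¬ Polynomial.cyclotomic n ℤ ∣ qPoch t := by
  intro hdvd
  unfold qPoch at hdvd
  obtain ⟨i, hi, hdvd'⟩ := (cyc_prime hn).exists_mem_finset_dvd hdvd
  rw [Finset.mem_range] at hi
  exact cyc_not_dvd (Nat.succ_pos i) (by omega) hdvd'

lemma cyc_dvd_B {B : ℕ → ℕ → Polynomial ℤ}
    (hB : ∀ m k : ℕ, k ≤ m → B m k * (qPoch k * qPoch (m - k)) = qPoch m)
    {n m i : ℕ} (hn : 0 < n) (him : i ≤ m) (hi : i < n) (hmi : m - i < n) (hnm : n ≤ m) :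
    Polynomial.cyclotomic n ℤ ∣ B m i := by
  have hp := cyc_prime hn
  have h1 : Polynomial.cyclotomic n ℤ ∣ qPoch m := by
    have hmem : n - 1 ∈ Finset.range m := Finset.mem_range.mpr (by omega)
    have hfac : (1 - X ^ (n - 1 + 1) : Polynomial ℤ) ∣ qPoch m :=
      Finset.dvd_prod_of_mem _ hmem
    rw [show n - 1 + 1 = n by omega] at hfac
    have hcn : Polynomial.cyclotomic n ℤ ∣ (1 - X ^ n : Polynomial ℤ) := by
      have h := Polynomial.cyclotomic.dvd_X_pow_sub_one n ℤ
      have := dvd_neg.mpr h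
      rwa [neg_sub] at this
    exact hcn.trans hfac
  rw [← hB m i him] at h1
  rcases hp.dvd_mul.mp h1 with h | h
  · exact h
  rcases hp.dvd_mul.mp h with h | h
  · exact absurd h (cyc_not_dvd_qPoch hn hi)
  · exact absurd h (cyc_not_dvd_qPoch hn hmi)

theorem stmt_13 (n : ℕ) (hn : 0 < n) (B : ℕ → ℕ → Polynomial ℤ)
    (hB : ∀ m k : ℕ, k ≤ m → B m k * (qPoch k * qPoch (m - k)) = qPoch m)
    (hB' : ∀ m k : ℕ, m < k → B m k = 0) :
    (Polynomial.cyclotomic n ℤ) ^ 2 ∣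
      (∑ i ∈ Finset.range n, ∑ j ∈ Finset.range n,
          X ^ (j ^ 2 + i + j) * (B (i + j) i) ^ 2) -
        ∑ m ∈ Finset.range n, X ^ m * B (2 * m) m := by
  classical
  set F : ℕ → ℕ → Polynomial ℤ := fun m i => X ^ (i * i + m) * (B m i) ^ 2 with hF
  have hS : ∑ i ∈ Finset.range n, ∑ j ∈ Finset.range n,
      X ^ (j ^ 2 + i + j) * (B (i + j) i) ^ 2
      = ∑ p ∈ (Finset.range n ×ˢ Finset.range n), F (p.1 + p.2) p.2 := by
    rw [Finset.sum_product]
    refine Finset.sum_congr rfl fun i _ => Finset.sum_congr rfl fun j _ => ?_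
    simp only [hF]
    rw [show j ^ 2 + i + j = j * j + (i + j) by ring]
    rw [B_symm hB (show i ≤ i + j by omega), show i + j - i = j by omega]
  have hT : ∑ m ∈ Finset.range n, X ^ m * B (2 * m) m
      = ∑ p ∈ (Finset.range n ×ˢ Finset.range n).filter (fun p => p.1 + p.2 < n),
          F (p.1 + p.2) p.2 := by
    have step1 : ∀ m ∈ Finset.range n, X ^ m * B (2 * m) m
        = ∑ i ∈ Finset.range (m + 1), F m i := by
      intro m _
      rw [central hB hB' m, Finset.mul_sum]
      refine Finset.sum_congr rfl fun i _ => ?_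
      simp only [hF]
      rw [pow_add]
      ring
    rw [Finset.sum_congr rfl step1, Finset.sum_sigma' (Finset.range n) _ (fun m i => F m i)]
    refine Finset.sum_nbij' (fun p => (p.1 - p.2, p.2)) (fun q => ⟨q.1 + q.2, q.2⟩)
      ?_ ?_ ?_ ?_ ?_
    · rintro ⟨m, i⟩ hp
      simp only [Finset.mem_sigma, Finset.mem_range] at hp
      simp only [Finset.mem_filter, Finset.mem_product, Finset.mem_range]
      omega
    · rintro ⟨a, b⟩ hq
      simp only [Finset.mem_filter, Finset.mem_product, Finset.mem_range] at hq
      simp only [Finset.mem_sigma, Finset.mem_range]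
      omega
    · rintro ⟨m, i⟩ hp
      simp only [Finset.mem_sigma, Finset.mem_range] at hp
      simp only [Sigma.mk.inj_iff]
      constructor
      · omega
      · exact heq_of_eq rfl
    · rintro ⟨a, b⟩ hq
      simp only [Finset.mem_filter, Finset.mem_product, Finset.mem_range] at hq
      dsimp only
      rw [Nat.add_sub_cancel]
    · rintro ⟨m, i⟩ hp
      simp only [Finset.mem_sigma, Finset.mem_range] at hp
      simp only []
      rw [show m - i + i = m by omega]
  rw [hS, hT, ← Finset.sum_filter_add_sum_filter_not (Finset.range n ×ˢ Finset.range n)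
    (fun p => p.1 + p.2 < n) (fun p => F (p.1 + p.2) p.2), add_sub_cancel_left]
  refine Finset.dvd_sum fun p hp => ?_
  simp only [Finset.mem_filter, Finset.mem_product, Finset.mem_range, not_lt] at hp
  have hdvd : Polynomial.cyclotomic n ℤ ∣ B (p.1 + p.2) p.2 :=
    cyc_dvd_B hB hn (by omega) (by omega) (by omega) (by omega)
  simp only [hF]
  exact Dvd.dvd.mul_left (pow_dvd_pow_of_dvd hdvd 2) _
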